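/- Let f : ℝ^d → ℝ be differentiable with ∇f(x) ∈ Range(P) for all relevant x (P a symmetric projection), L-smooth on an affine subspace x⁰ + Range(P), and let η ≤ 1/(2L). Let g be a random vector with 𝔼[g] = ∇f(x^k), let y^{k+1} = prox_{ηψ}(x^k − ηg) where ψ is convex with domain contained in x⁰ + Range(P). Then for any x ∈ x⁰ + Range(P): (1/η)𝔼[⟨x − x^k, x^k − y^{k+1}⟩] ≤ 𝔼[P(x) − P(y^{k+1}) − (1/(4η))‖y^{k+1} − x^k‖² + (η/2)‖g − ∇f(x^k)‖²_P] − D_f(x, x^k), where P(·) = f(·) + ψ(·) is the composite objective and D_f is the Bregman divergence of f. -/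

import Mathlib

open Matrix MeasureTheory

private lemma dp_self_nonneg {d : ℕ} (v : Fin d → ℝ) : (0:ℝ) ≤ v ⬝ᵥ v :=
  Finset.sum_nonneg fun _ _ => mul_self_nonneg _

/-- Young's inequality for the dot product. -/
private lemma dp_young {d : ℕ} {η : ℝ} (hη : 0 < η) (p q : Fin d → ℝ) :
    p ⬝ᵥ q ≤ (η / 2) * (p ⬝ᵥ p) + (1 / (2 * η)) * (q ⬝ᵥ q) := by
  have hexp : (η • p - q) ⬝ᵥ (η • p - q)
      = η ^ 2 * (p ⬝ᵥ p) - 2 * η * (p ⬝ᵥ q) + q ⬝ᵥ q := by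
    simp only [dotProduct, Pi.sub_apply, Pi.smul_apply, smul_eq_mul,
      Finset.mul_sum, ← Finset.sum_add_distrib, ← Finset.sum_sub_distrib]
    exact Finset.sum_congr rfl fun i _ => by ring
  have h0 : (0:ℝ) ≤ (η • p - q) ⬝ᵥ (η • p - q) := dp_self_nonneg _
  have hident : (η / 2) * (p ⬝ᵥ p) + (1 / (2 * η)) * (q ⬝ᵥ q) - p ⬝ᵥ q
      = (1 / (2 * η)) * ((η • p - q) ⬝ᵥ (η • p - q)) := by
    rw [hexp]; field_simp; ring
  have h1 : (0:ℝ) ≤ (1 / (2 * η)) * ((η • p - q) ⬝ᵥ (η • p - q)) :=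
    mul_nonneg (by positivity) h0
  linarith

set_option maxHeartbeats 1000000 in
/-- Pointwise core inequality. -/
private lemma asvrcd_pointwise {d : ℕ}
    (Pm : Matrix (Fin d) (Fin d) ℝ)
    (hP_proj : Pm * Pm = Pm) (hP_sym : Pmᵀ = Pm)
    (x0 : Fin d → ℝ)
    (f : (Fin d → ℝ) → ℝ) (f' : (Fin d → ℝ) → (Fin d → ℝ))
    (L : ℝ) (hL : 0 < L)
    (hsmooth : ∀ u v : Fin d → ℝ, (∃ a, Pm.mulVec a = u - x0) →
      (∃ a, Pm.mulVec a = v - x0) →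
      f u ≤ f v + f' v ⬝ᵥ (u - v) + (L / 2) * ((u - v) ⬝ᵥ (u - v)))
    (η : ℝ) (hη_pos : 0 < η) (hη : η ≤ 1 / (2 * L))
    (ψ : (Fin d → ℝ) → ℝ) (hψ : ConvexOn ℝ Set.univ ψ)
    (xk : Fin d → ℝ) (hxk : ∃ a, Pm.mulVec a = xk - x0)
    (gv : Fin d → ℝ)
    (yv : Fin d → ℝ) (hy_mem : ∃ a, Pm.mulVec a = yv - x0)
    (hy_prox : ∀ u : Fin d → ℝ, (∃ a, Pm.mulVec a = u - x0) →
      η * ψ yv + (1 / 2) * ((yv - (xk - η • gv)) ⬝ᵥ (yv - (xk - η • gv))) ≤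
        η * ψ u + (1 / 2) * ((u - (xk - η • gv)) ⬝ᵥ (u - (xk - η • gv))))
    (x : Fin d → ℝ) (hx : ∃ a, Pm.mulVec a = x - x0) :
    (1 / η) * ((x - xk) ⬝ᵥ (xk - yv)) ≤
      ((f x + ψ x) - (f yv + ψ yv)
        - (1 / (4 * η)) * ((yv - xk) ⬝ᵥ (yv - xk))
        + (η / 2) * (Pm.mulVec (gv - f' xk) ⬝ᵥ (gv - f' xk)))
      - (f x - f xk - f' xk ⬝ᵥ (x - xk))
      + (gv - f' xk) ⬝ᵥ (x - xk) := by
  set z : Fin d → ℝ := xk - η • gv with hz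
  set G : Fin d → ℝ := f' xk with hG
  obtain ⟨ay, hay⟩ := hy_mem
  obtain ⟨ax, hax⟩ := hx
  obtain ⟨ak, hak⟩ := hxk
  have hmem_seg : ∀ t : ℝ, ∃ a, Pm.mulVec a = (yv + t • (x - yv)) - x0 := by
    intro t
    refine ⟨ay + t • (ax - ay), ?_⟩
    rw [Matrix.mulVec_add, Matrix.mulVec_smul, Matrix.mulVec_sub, hay, hax]
    module
  set c : ℝ := (x - yv) ⬝ᵥ (x - yv) with hc
  have hc0 : (0:ℝ) ≤ c := dp_self_nonneg _
  set Ay : ℝ := η * ψ yv + (1 / 2) * ((yv - z) ⬝ᵥ (yv - z)) with hAy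
  set Ax : ℝ := η * ψ x + (1 / 2) * ((x - z) ⬝ᵥ (x - z)) with hAx
  have key : ∀ t : ℝ, 0 < t → t < 1 → ((1 - t) / 2) * c ≤ Ax - Ay := by
    intro t ht0 ht1
    have hu := hy_prox (yv + t • (x - yv)) (hmem_seg t)
    have hconv := hψ.2 (Set.mem_univ yv) (Set.mem_univ x)
      (by linarith : (0:ℝ) ≤ 1 - t) ht0.le (by ring)
    have hψu : ψ (yv + t • (x - yv)) ≤ (1 - t) * ψ yv + t * ψ x := by
      have hseg : (1 - t) • yv + t • x = yv + t • (x - yv) := by module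
      rw [hseg] at hconv
      simpa [smul_eq_mul] using hconv
    have hquad : ((yv + t • (x - yv)) - z) ⬝ᵥ ((yv + t • (x - yv)) - z)
        = (1 - t) * ((yv - z) ⬝ᵥ (yv - z)) + t * ((x - z) ⬝ᵥ (x - z))
          - t * (1 - t) * c := by
      simp only [hc, dotProduct, Pi.sub_apply, Pi.add_apply, Pi.smul_apply, smul_eq_mul,
        Finset.mul_sum, ← Finset.sum_add_distrib, ← Finset.sum_sub_distrib]
      exact Finset.sum_congr rfl fun i _ => by ring
    have h2 : t * (((1 - t) / 2) * c) ≤ t * (Ax - Ay) := by nlinarith [hu, hψu, hquad]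
    exact (mul_le_mul_iff_right₀ ht0).mp h2
  have strong : c / 2 ≤ Ax - Ay := by
    by_contra hcon
    push_neg at hcon
    have h4 : c / 4 ≤ Ax - Ay := by
      have := key (1/2) (by norm_num) (by norm_num)
      linarith
    have hcpos : (0:ℝ) < c := by linarith
    have htpos : (0:ℝ) < 1/2 - (Ax - Ay) / c := by
      have : (Ax - Ay) / c < 1/2 := (div_lt_iff₀ hcpos).mpr (by linarith)
      linarith
    have hAδ : (0:ℝ) ≤ Ax - Ay := le_trans (div_nonneg hc0 (by norm_num)) h4
    have htlt : 1/2 - (Ax - Ay) / c < 1 := by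
      have : (0:ℝ) ≤ (Ax - Ay) / c := div_nonneg hAδ hc0
      linarith
    have ht := key _ htpos htlt
    have heq : ((1 - (1/2 - (Ax - Ay)/c)) / 2) * c = c/4 + (Ax - Ay)/2 := by
      field_simp; ring
    rw [heq] at ht
    linarith
  have Eid : (1/2) * ((yv - z) ⬝ᵥ (yv - z)) + (1/2) * c - (1/2) * ((x - z) ⬝ᵥ (x - z))
      = (yv - xk) ⬝ᵥ (yv - xk) + η * (gv ⬝ᵥ (yv - x)) + (x - xk) ⬝ᵥ (xk - yv) := by
    simp only [hz, hc, dotProduct, Pi.sub_apply, Pi.smul_apply, smul_eq_mul,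
      Finset.mul_sum, ← Finset.sum_add_distrib, ← Finset.sum_sub_distrib]
    exact Finset.sum_congr rfl fun i _ => by ring
  have F1 : (x - xk) ⬝ᵥ (xk - yv)
      ≤ η * ψ x - η * ψ yv + η * (gv ⬝ᵥ (x - yv)) - (yv - xk) ⬝ᵥ (yv - xk) := by
    have hgsplit : gv ⬝ᵥ (x - yv) = - (gv ⬝ᵥ (yv - x)) := by
      simp only [dotProduct, Pi.sub_apply, ← Finset.sum_neg_distrib]
      exact Finset.sum_congr rfl fun i _ => by ring
    rw [hgsplit]
    linarith [strong, Eid]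
  have hsymdp : ∀ v w : Fin d → ℝ, v ⬝ᵥ Pm.mulVec w = Pm.mulVec v ⬝ᵥ w := by
    intro v w
    rw [Matrix.dotProduct_mulVec]
    congr 1
    conv_lhs => rw [← hP_sym]
    exact Matrix.vecMul_transpose Pm v
  have hPP : ∀ v : Fin d → ℝ, Pm.mulVec (Pm.mulVec v) = Pm.mulVec v := by
    intro v; rw [Matrix.mulVec_mulVec, hP_proj]
  have hw : Pm.mulVec (ak - ay) = xk - yv := by
    rw [Matrix.mulVec_sub, hak, hay]; module
  set q : ℝ := Pm.mulVec (gv - G) ⬝ᵥ (gv - G) with hq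
  have hyoung : (gv - G) ⬝ᵥ (xk - yv)
      ≤ (η / 2) * q + (1 / (2 * η)) * ((xk - yv) ⬝ᵥ (xk - yv)) := by
    have h1 : (gv - G) ⬝ᵥ (xk - yv) = Pm.mulVec (gv - G) ⬝ᵥ (xk - yv) := by
      rw [← hw, hsymdp, hsymdp, hPP]
    have h2 : Pm.mulVec (gv - G) ⬝ᵥ Pm.mulVec (gv - G) = q := by
      rw [hsymdp, hPP, ← hsymdp, dotProduct_comm]
    have h3 := dp_young hη_pos (Pm.mulVec (gv - G)) (xk - yv)
    rw [h2] at h3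
    linarith [h1 ▸ h3]
  have F2 := hsmooth yv xk ⟨ay, hay⟩ ⟨ak, hak⟩
  rw [← hG] at F2
  have hflip : (xk - yv) ⬝ᵥ (xk - yv) = (yv - xk) ⬝ᵥ (yv - xk) := by
    simp only [dotProduct, Pi.sub_apply]
    exact Finset.sum_congr rfl fun i _ => by ring
  have Eid2 : gv ⬝ᵥ (x - yv)
      = G ⬝ᵥ (x - xk) - G ⬝ᵥ (yv - xk) + (gv - G) ⬝ᵥ (x - xk)
        + (gv - G) ⬝ᵥ (xk - yv) := by
    simp only [dotProduct, Pi.sub_apply, ← Finset.sum_add_distrib,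
      ← Finset.sum_sub_distrib]
    exact Finset.sum_congr rfl fun i _ => by ring
  have hLb : η * L ≤ 1 / 2 := by
    have h2L : (0:ℝ) < 2 * L := by linarith
    have := (le_div_iff₀ h2L).mp hη
    linarith
  set s : ℝ := (yv - xk) ⬝ᵥ (yv - xk) with hs
  have hs0 : (0:ℝ) ≤ s := dp_self_nonneg _
  clear_value z G c Ay Ax q s
  rw [one_div, inv_mul_eq_div, div_le_iff₀ hη_pos]
  have e1 : 1 / (4 * η) * s * η = s / 4 := by field_simp
  have e2 : η * (1 / (2 * η)) = 1 / 2 := by field_simp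
  have hy' : η * ((gv - G) ⬝ᵥ (xk - yv))
      ≤ η * ((η / 2) * q) + η * ((1 / (2 * η)) * ((xk - yv) ⬝ᵥ (xk - yv))) := by
    have := mul_le_mul_of_nonneg_left hyoung hη_pos.le
    linarith [this]
  have hy'' : η * ((1 / (2 * η)) * ((xk - yv) ⬝ᵥ (xk - yv))) = (1/2) * s := by
    rw [hflip, ← mul_assoc, e2]
  rw [hy''] at hy'
  have Eid2' : η * (gv ⬝ᵥ (x - yv))
      = η * (G ⬝ᵥ (x - xk)) - η * (G ⬝ᵥ (yv - xk)) + η * ((gv - G) ⬝ᵥ (x - xk))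
        + η * ((gv - G) ⬝ᵥ (xk - yv)) := by rw [Eid2]; ring
  have hmul : η * (gv ⬝ᵥ (x - yv))
      ≤ η * (G ⬝ᵥ (x - xk)) - η * (G ⬝ᵥ (yv - xk)) + η * ((gv - G) ⬝ᵥ (x - xk))
        + η * ((η / 2) * q) + (1/2) * s := by linarith [Eid2', hy']
  have hsm : η * f yv ≤ η * f xk + η * (G ⬝ᵥ (yv - xk)) + (1/4) * s := by
    have h1 : η * (L / 2) * s ≤ (1/4) * s := by
      nlinarith [mul_nonneg (by linarith : (0:ℝ) ≤ 1/2 - η * L) hs0]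
    have h2 := mul_le_mul_of_nonneg_left F2 hη_pos.le
    have h3 : η * (f xk + G ⬝ᵥ (yv - xk) + L / 2 * s)
        = η * f xk + η * (G ⬝ᵥ (yv - xk)) + η * (L/2) * s := by ring
    rw [h3] at h2
    linarith
  have hexpand : ((f x + ψ x) - (f yv + ψ yv) - 1 / (4 * η) * s + η / 2 * q
        - (f x - f xk - G ⬝ᵥ (x - xk)) + (gv - G) ⬝ᵥ (x - xk)) * η
      = η * f x + η * ψ x - η * f yv - η * ψ yv - 1 / (4 * η) * s * η
        + η * ((η/2) * q) - η * f x + η * f xk + η * (G ⬝ᵥ (x - xk))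
        + η * ((gv - G) ⬝ᵥ (x - xk)) := by ring
  linarith [F1, hmul, hsm, hexpand, e1, hs0]

private lemma dp_integral_zero {d : ℕ} {Ω : Type*} [MeasurableSpace Ω] (μ : Measure Ω)
    [IsProbabilityMeasure μ]
    (x xk : Fin d → ℝ) (G : Fin d → ℝ) (g : Ω → (Fin d → ℝ)) (hg_int : Integrable g μ)
    (hg_unbiased : ∫ ω, g ω ∂μ = G) :
    (Integrable (fun ω => (g ω - G) ⬝ᵥ (x - xk)) μ) ∧
    (∫ ω, (g ω - G) ⬝ᵥ (x - xk) ∂μ = 0) := by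
  let Tl : (Fin d → ℝ) →ₗ[ℝ] ℝ :=
    { toFun := fun v => v ⬝ᵥ (x - xk)
      map_add' := fun a b => add_dotProduct a b (x - xk)
      map_smul' := fun c a => by simp [smul_dotProduct]; ring }
  let T : (Fin d → ℝ) →L[ℝ] ℝ := Tl.toContinuousLinearMap
  have hsub : Integrable (fun ω => g ω - G) μ := hg_int.sub (integrable_const _)
  have hTeq : (fun ω => (g ω - G) ⬝ᵥ (x - xk)) = fun ω => T (g ω - G) := rfl
  constructor
  · rw [hTeq]; exact T.integrable_comp hsub
  · rw [hTeq]
    rw [T.integral_comp_comm hsub]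
    have h2 : ∫ ω, (g ω - G) ∂μ = 0 := by
      rw [integral_sub hg_int (integrable_const _), hg_unbiased, integral_const]
      simp
    rw [h2]
    simp [T, Tl]

/-- Key one-step lemma for ASVRCD: for an unbiased stochastic gradient `g` of
`f` at `x^k` and the prox step `y^{k+1} = prox_{ηψ}(x^k - ηg)` (constrained to
the affine subspace `x⁰ + Range(P)` containing the domain of `ψ`), with
`η ≤ 1/(2L)`, one has, for any `x` in the affine subspace,
`(1/η)𝔼⟨x - x^k, x^k - y^{k+1}⟩ ≤ 𝔼[P(x) - P(y^{k+1}) - ‖y^{k+1}-x^k‖²/(4η)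
  + (η/2)‖g - ∇f(x^k)‖²_P] - D_f(x, x^k)`. -/
theorem asvrcd_key_lemma
    {d : ℕ} {Ω : Type*} [MeasurableSpace Ω] (μ : Measure Ω) [IsProbabilityMeasure μ]
    (Pm : Matrix (Fin d) (Fin d) ℝ)
    (hP_proj : Pm * Pm = Pm) (hP_sym : Pmᵀ = Pm)
    (x0 : Fin d → ℝ)
    (f : (Fin d → ℝ) → ℝ) (f' : (Fin d → ℝ) → (Fin d → ℝ))
    (hgrad_range : ∀ z : Fin d → ℝ, (∃ u, Pm.mulVec u = z - x0) →
      Pm.mulVec (f' z) = f' z)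
    (L : ℝ) (hL : 0 < L)
    (hsmooth : ∀ u v : Fin d → ℝ, (∃ a, Pm.mulVec a = u - x0) →
      (∃ a, Pm.mulVec a = v - x0) →
      f u ≤ f v + f' v ⬝ᵥ (u - v) + (L / 2) * ((u - v) ⬝ᵥ (u - v)))
    (η : ℝ) (hη_pos : 0 < η) (hη : η ≤ 1 / (2 * L))
    (ψ : (Fin d → ℝ) → ℝ) (hψ : ConvexOn ℝ Set.univ ψ)
    (xk : Fin d → ℝ) (hxk : ∃ a, Pm.mulVec a = xk - x0)
    (g : Ω → (Fin d → ℝ)) (hg_int : Integrable g μ)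
    (hg_unbiased : ∫ ω, g ω ∂μ = f' xk)
    (y : Ω → (Fin d → ℝ))
    (hy_mem : ∀ ω, ∃ a, Pm.mulVec a = y ω - x0)
    -- `y ω` is the prox of `x^k - η g ω` for `ηψ` restricted to the affine subspace
    (hy_prox : ∀ ω, ∀ u : Fin d → ℝ, (∃ a, Pm.mulVec a = u - x0) →
      η * ψ (y ω) + (1 / 2) * ((y ω - (xk - η • g ω)) ⬝ᵥ (y ω - (xk - η • g ω))) ≤
        η * ψ u + (1 / 2) * ((u - (xk - η • g ω)) ⬝ᵥ (u - (xk - η • g ω))))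
    (x : Fin d → ℝ) (hx : ∃ a, Pm.mulVec a = x - x0)
    (hint1 : Integrable (fun ω => (x - xk) ⬝ᵥ (xk - y ω)) μ)
    (hint2 : Integrable (fun ω =>
      (f x + ψ x) - (f (y ω) + ψ (y ω))
        - (1 / (4 * η)) * ((y ω - xk) ⬝ᵥ (y ω - xk))
        + (η / 2) * (Pm.mulVec (g ω - f' xk) ⬝ᵥ (g ω - f' xk))) μ) :
    (1 / η) * ∫ ω, (x - xk) ⬝ᵥ (xk - y ω) ∂μ ≤
      (∫ ω, ((f x + ψ x) - (f (y ω) + ψ (y ω))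
        - (1 / (4 * η)) * ((y ω - xk) ⬝ᵥ (y ω - xk))
        + (η / 2) * (Pm.mulVec (g ω - f' xk) ⬝ᵥ (g ω - f' xk))) ∂μ)
      - (f x - f xk - f' xk ⬝ᵥ (x - xk)) := by
  obtain ⟨hCint, hCzero⟩ := dp_integral_zero μ x xk (f' xk) g hg_int hg_unbiased
  set D : ℝ := f x - f xk - f' xk ⬝ᵥ (x - xk) with hD
  have hpt : ∀ ω, (1 / η) * ((x - xk) ⬝ᵥ (xk - y ω)) ≤
      (((f x + ψ x) - (f (y ω) + ψ (y ω))
        - (1 / (4 * η)) * ((y ω - xk) ⬝ᵥ (y ω - xk))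
        + (η / 2) * (Pm.mulVec (g ω - f' xk) ⬝ᵥ (g ω - f' xk))) - D)
      + (g ω - f' xk) ⬝ᵥ (x - xk) := fun ω =>
    asvrcd_pointwise Pm hP_proj hP_sym x0 f f' L hL hsmooth η hη_pos hη ψ hψ xk hxk
      (g ω) (y ω) (hy_mem ω) (hy_prox ω) x hx
  have hlhs : Integrable (fun ω => (1 / η) * ((x - xk) ⬝ᵥ (xk - y ω))) μ :=
    hint1.const_mul _
  have hrhs : Integrable (fun ω =>
      (((f x + ψ x) - (f (y ω) + ψ (y ω))
        - (1 / (4 * η)) * ((y ω - xk) ⬝ᵥ (y ω - xk))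
        + (η / 2) * (Pm.mulVec (g ω - f' xk) ⬝ᵥ (g ω - f' xk))) - D)
      + (g ω - f' xk) ⬝ᵥ (x - xk)) μ := (hint2.sub (integrable_const D)).add hCint
  have hmono := integral_mono hlhs hrhs hpt
  rw [integral_const_mul] at hmono
  have h1 : ∫ ω, ((((f x + ψ x) - (f (y ω) + ψ (y ω))
        - (1 / (4 * η)) * ((y ω - xk) ⬝ᵥ (y ω - xk))
        + (η / 2) * (Pm.mulVec (g ω - f' xk) ⬝ᵥ (g ω - f' xk))) - D)
      + (g ω - f' xk) ⬝ᵥ (x - xk)) ∂μ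
      = (∫ ω, (((f x + ψ x) - (f (y ω) + ψ (y ω))
        - (1 / (4 * η)) * ((y ω - xk) ⬝ᵥ (y ω - xk))
        + (η / 2) * (Pm.mulVec (g ω - f' xk) ⬝ᵥ (g ω - f' xk))) - D) ∂μ)
      + ∫ ω, ((g ω - f' xk) ⬝ᵥ (x - xk)) ∂μ :=
    integral_add (hint2.sub (integrable_const D)) hCint
  have h2 : ∫ ω, (((f x + ψ x) - (f (y ω) + ψ (y ω))
        - (1 / (4 * η)) * ((y ω - xk) ⬝ᵥ (y ω - xk))
        + (η / 2) * (Pm.mulVec (g ω - f' xk) ⬝ᵥ (g ω - f' xk))) - D) ∂μ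
      = (∫ ω, ((f x + ψ x) - (f (y ω) + ψ (y ω))
        - (1 / (4 * η)) * ((y ω - xk) ⬝ᵥ (y ω - xk))
        + (η / 2) * (Pm.mulVec (g ω - f' xk) ⬝ᵥ (g ω - f' xk))) ∂μ)
      - ∫ (_ : Ω), D ∂μ :=
    integral_sub hint2 (integrable_const D)
  have h3 : ∫ (_ : Ω), D ∂μ = D := by simp
  linarith [hmono, h1, h2, h3, hCzero]
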